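/- Let 0 < q < 1, λ > 0, and p > 1. For every sequence (a_n)_{n∈ℤ} of nonnegative reals, ∑_{n∈ℤ} (q^{λn} ∑_{k=-∞}^{n} q^{-λk} a_k)^p ≤ (1-q^λ)^{-p} ∑_{n∈ℤ} a_n^p. -/

import Mathlib

open scoped ENNReal

open MeasureTheory in
/-- Hölder/Jensen step for weighted tsums in `ℝ≥0∞`. -/
lemma holder_tsum_aux (w b : ℕ → ℝ≥0∞) {p : ℝ} (hp : 1 < p) :
    (∑' m, w m * b m) ^ p ≤ (∑' m, w m) ^ (p - 1) * ∑' m, w m * (b m) ^ p := by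
  set q : ℝ := p / (p - 1) with hqdef
  have hpq : p.HolderConjugate q := Real.HolderConjugate.conjExponent hp
  have hp0 : (0:ℝ) < p := lt_trans one_pos hp
  have hq0 : (0:ℝ) < q := hpq.symm.pos
  have key : (∑' m, w m * b m) ≤
      (∑' m, w m) ^ (1 / q) * (∑' m, w m * (b m) ^ p) ^ (1 / p) := by
    have h := ENNReal.lintegral_mul_le_Lp_mul_Lq (μ := Measure.count (α := ℕ))
      hpq (f := fun m => (w m) ^ (1/p) * b m) (g := fun m => (w m) ^ (1/q))
      (measurable_of_countable _).aemeasurable (measurable_of_countable _).aemeasurable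
    simp only [Pi.mul_apply, lintegral_count] at h
    calc (∑' m, w m * b m)
        = ∑' m, ((w m) ^ (1/p) * b m) * (w m) ^ (1/q) := by
          refine tsum_congr fun m => ?_
          have h1 : 1 / p + 1 / q = 1 := by
            rw [one_div, one_div]; exact hpq.inv_add_inv_eq_one
          rw [mul_right_comm, ← ENNReal.rpow_add_of_nonneg _ _ (by positivity) (by positivity),
            h1, ENNReal.rpow_one]
      _ ≤ (∑' m, ((w m) ^ (1/p) * b m) ^ p) ^ (1/p) *
          (∑' m, ((w m) ^ (1/q)) ^ q) ^ (1/q) := h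
      _ = (∑' m, w m) ^ (1 / q) * (∑' m, w m * (b m) ^ p) ^ (1 / p) := by
          rw [mul_comm]
          congr 2
          · refine tsum_congr fun m => ?_
            rw [← ENNReal.rpow_mul, one_div_mul_cancel hq0.ne', ENNReal.rpow_one]
          · refine tsum_congr fun m => ?_
            rw [ENNReal.mul_rpow_of_nonneg _ _ hp0.le, ← ENNReal.rpow_mul,
              one_div_mul_cancel hp0.ne', ENNReal.rpow_one]
  calc (∑' m, w m * b m) ^ p
      ≤ ((∑' m, w m) ^ (1 / q) * (∑' m, w m * (b m) ^ p) ^ (1 / p)) ^ p :=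
        ENNReal.rpow_le_rpow key hp0.le
    _ = (∑' m, w m) ^ (p - 1) * ∑' m, w m * (b m) ^ p := by
        rw [ENNReal.mul_rpow_of_nonneg _ _ hp0.le, ← ENNReal.rpow_mul, ← ENNReal.rpow_mul]
        rw [one_div_mul_cancel hp0.ne', ENNReal.rpow_one]
        congr 2
        field_simp [hqdef]
        rw [hqdef, div_mul_cancel₀ _ (sub_pos.2 hp).ne']

theorem hardy_Z (q l p : ℝ) (hq : 0 < q) (hq1 : q < 1) (hl : 0 < l)
    (hp : 1 < p) (a : ℤ → ℝ≥0∞) :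
    ∑' n : ℤ, ((ENNReal.ofReal q) ^ (l * (n : ℝ)) *
        ∑' m : ℕ, (ENNReal.ofReal q) ^ (-(l * ((n : ℝ) - (m : ℝ)))) * a (n - m)) ^ p
      ≤ ENNReal.ofReal ((1 - q ^ l) ^ (-p)) * ∑' n : ℤ, (a n) ^ p := by
  set Q : ℝ≥0∞ := ENNReal.ofReal q with hQdef
  have hQ0 : Q ≠ 0 := by simp [hQdef, hq]
  have hQt : Q ≠ ⊤ := ENNReal.ofReal_ne_top
  have hp0 : (0:ℝ) < p := lt_trans one_pos hp
  set w : ℕ → ℝ≥0∞ := fun m => Q ^ (l * (m : ℝ)) with hwdef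
  -- rewrite each summand as a convolution with weight w
  have hterm : ∀ n : ℤ, Q ^ (l * (n : ℝ)) *
      ∑' m : ℕ, Q ^ (-(l * ((n : ℝ) - (m : ℝ)))) * a (n - m)
      = ∑' m : ℕ, w m * a (n - m) := by
    intro n
    rw [← ENNReal.tsum_mul_left]
    refine tsum_congr fun m => ?_
    rw [← mul_assoc, ← ENNReal.rpow_add _ _ hQ0 hQt, hwdef]
    ring_nf
  -- the total weight
  have hql1 : q ^ l < 1 := Real.rpow_lt_one hq.le hq1 hl
  have hql0 : (0:ℝ) < q ^ l := Real.rpow_pos_of_pos hq l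
  have hsumw : ∑' m, w m = ENNReal.ofReal ((1 - q ^ l)⁻¹) := by
    have : ∀ m : ℕ, w m = (Q ^ l) ^ m := fun m => by
      show Q ^ (l * (m : ℝ)) = _
      rw [← ENNReal.rpow_natCast (Q ^ l) m, ← ENNReal.rpow_mul]
    simp_rw [this, ENNReal.tsum_geometric]
    rw [hQdef, ENNReal.ofReal_rpow_of_pos hq, ← ENNReal.ofReal_one,
      ← ENNReal.ofReal_sub _ hql0.le, ENNReal.ofReal_inv_of_pos (by linarith)]
  have hS0 : ∑' m, w m ≠ 0 := by
    rw [hsumw]; simp only [ne_eq, ENNReal.ofReal_eq_zero, not_le]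
    exact inv_pos.mpr (by linarith)
  have hSt : ∑' m, w m ≠ ⊤ := by rw [hsumw]; exact ENNReal.ofReal_ne_top
  calc ∑' n : ℤ, (Q ^ (l * (n : ℝ)) *
        ∑' m : ℕ, Q ^ (-(l * ((n : ℝ) - (m : ℝ)))) * a (n - m)) ^ p
      = ∑' n : ℤ, (∑' m : ℕ, w m * a (n - m)) ^ p := by
        refine tsum_congr fun n => ?_; rw [hterm n]
    _ ≤ ∑' n : ℤ, (∑' m, w m) ^ (p - 1) * ∑' m : ℕ, w m * (a (n - m)) ^ p :=
        ENNReal.tsum_le_tsum fun n => holder_tsum_aux w (fun m => a (n - m)) hp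
    _ = (∑' m, w m) ^ (p - 1) * ∑' n : ℤ, ∑' m : ℕ, w m * (a (n - m)) ^ p := by
        rw [ENNReal.tsum_mul_left]
    _ = (∑' m, w m) ^ (p - 1) * ∑' m : ℕ, w m * ∑' n : ℤ, (a (n - m)) ^ p := by
        rw [ENNReal.tsum_comm]
        simp_rw [ENNReal.tsum_mul_left]
    _ = (∑' m, w m) ^ (p - 1) * ((∑' m, w m) * ∑' n : ℤ, (a n) ^ p) := by
        congr 1
        rw [← ENNReal.tsum_mul_right]
        refine tsum_congr fun m => ?_
        congr 1
        exact Equiv.tsum_eq (Equiv.subRight (m : ℤ)) (fun n => a n ^ p)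
    _ = ENNReal.ofReal ((1 - q ^ l) ^ (-p)) * ∑' n : ℤ, (a n) ^ p := by
        rw [← mul_assoc]
        congr 1
        have h1 : (∑' m, w m) ^ (p - 1) * ∑' m, w m = (∑' m, w m) ^ p := by
          nth_rewrite 2 [show (∑' m, w m) = (∑' m, w m) ^ (1:ℝ) from
            (ENNReal.rpow_one _).symm]
          rw [← ENNReal.rpow_add _ _ hS0 hSt]
          norm_num
        have hb : (0:ℝ) ≤ 1 - q ^ l := by linarith
        rw [h1, hsumw, ENNReal.ofReal_rpow_of_pos (inv_pos.mpr (by linarith))]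
        congr 1
        rw [Real.inv_rpow hb, Real.rpow_neg hb]
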